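/- Let N ≥ 2, let p = 2, let V be continuous on the exterior region {x ∈ ℝ^N : |x| ≥ 1}, and assume condition (*) holds on {|x| > 1}. Let u ≥ 0 be continuous on {|x| ≥ 1}, C² on {|x| > 1}, and a subsolution of −Δu − Vu = 0 there (i.e. −Δu(x) − V(x)u(x) ≤ 0 for all |x| > 1). Assume there exists a positive function v, continuous on {|x| ≥ 1}, C² on {|x| > 1}, which is a supersolution (−Δv − Vv ≥ 0) and satisfies u(x)/v(x) → 0 as |x| → ∞. Then for every positive function w, continuous on {|x| ≥ 1}, C² on {|x| > 1}, which is a supersolution of −Δw − Vw = 0, there exists C > 0 such that u(x) ≤ C·w(x) for all |x| ≥ 1. -/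

import Mathlib

open Filter Topology

section OneDim

/-- At an interior local max of a C² real function of one variable,
the second derivative is nonpositive. -/
lemma second_deriv_nonpos_of_isLocalMax {g g' : ℝ → ℝ} {c : ℝ}
    (h1 : ∀ᶠ t in 𝓝 (0:ℝ), HasDerivAt g (g' t) t)
    (h2 : HasDerivAt g' c 0)
    (hmax : IsLocalMax g 0) : c ≤ 0 := by
  by_contra hc
  push_neg at hc
  have hg'0 : g' 0 = 0 := hmax.hasDerivAt_eq_zero h1.self_of_nhds
  have hslope := hasDerivAt_iff_tendsto_slope.1 h2
  have hpos : ∀ᶠ t in 𝓝[>] (0:ℝ), 0 < g' t := by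
    have h3 : Tendsto (slope g' 0) (𝓝[>] (0:ℝ)) (𝓝 c) :=
      hslope.mono_left (nhdsWithin_mono _ (fun t ht => ne_of_gt ht))
    have h4 : ∀ᶠ t in 𝓝[>] (0:ℝ), 0 < slope g' 0 t :=
      h3.eventually (eventually_gt_nhds hc)
    filter_upwards [h4, self_mem_nhdsWithin] with t ht ht'
    have : slope g' 0 t = g' t / t := by simp [slope, hg'0, div_eq_inv_mul]
    rw [this] at ht
    have := mul_pos ht (ht' : (0:ℝ) < t)
    rwa [div_mul_cancel₀] at this
    exact ne_of_gt ht'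
  have hder : ∀ᶠ t in 𝓝[>] (0:ℝ), HasDerivAt g (g' t) t :=
    nhdsWithin_le_nhds h1
  have hmax' : ∀ᶠ t in 𝓝[>] (0:ℝ), g t ≤ g 0 :=
    nhdsWithin_le_nhds hmax
  obtain ⟨a, ha0, ha⟩ := ((nhdsGT_basis (0:ℝ)).eventually_iff).1
    (hpos.and (hder.and hmax'))
  obtain ⟨b, hb0, hb⟩ := Metric.eventually_nhds_iff.1 h1
  set r := min a b / 2 with hr
  have hrpos : 0 < r := by positivity
  have hra : r < a := by
    have : r ≤ a / 2 := by
      apply div_le_div_of_nonneg_right _ _ |>.trans_eq rfl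
      · exact min_le_left a b
      · norm_num
    linarith
  have hrb : r < b := by
    have : r ≤ b / 2 := by
      apply div_le_div_of_nonneg_right _ _ |>.trans_eq rfl
      · exact min_le_right a b
      · norm_num
    linarith
  have hmono : StrictMonoOn g (Set.Icc 0 r) := by
    apply strictMonoOn_of_deriv_pos (convex_Icc 0 r)
    · intro t ht
      have : dist t 0 < b := by
        rw [Real.dist_eq, sub_zero, abs_of_nonneg ht.1]
        exact lt_of_le_of_lt ht.2 hrb
      exact (hb this).continuousAt.continuousWithinAt
    · intro t ht
      rw [interior_Icc] at ht
      have ht' : t ∈ Set.Ioo 0 a := ⟨ht.1, ht.2.trans hra⟩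
      rw [(ha ht').2.1.deriv]
      exact (ha ht').1
  have := hmono (Set.left_mem_Icc.2 hrpos.le) (Set.right_mem_Icc.2 hrpos.le) hrpos
  have hle : g r ≤ g 0 := (ha ⟨hrpos, hra⟩).2.2
  linarith

end OneDim

section Helpers

variable {E : Type*} [NormedAddCommGroup E] [NormedSpace ℝ E]

/-- Directional second derivative is nonpositive at an interior local max. -/
lemma directional_second_deriv_nonpos {f : E → ℝ} {U : Set E} (hU : IsOpen U)
    (hf : ContDiffOn ℝ 2 f U) {x₀ : E} (hx₀ : x₀ ∈ U) (hmax : IsLocalMax f x₀)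
    (e : E) : fderiv ℝ (fun y => fderiv ℝ f y e) x₀ e ≤ 0 := by
  set Fe : E → ℝ := fun y => fderiv ℝ f y e with hFe_def
  have hF : ContDiffOn ℝ 1 (fun y => fderiv ℝ f y) U :=
    hf.fderiv_of_isOpen hU (by norm_num)
  have hFe : ContDiffOn ℝ 1 Fe U := hF.clm_apply contDiffOn_const
  set c : ℝ → E := fun t => x₀ + t • e with hc_def
  have hc0 : c 0 = x₀ := by simp [hc_def]
  have hcc : Continuous c := by continuity
  have hcd : ∀ t : ℝ, HasDerivAt c e t := by
    intro t
    have : HasDerivAt (fun s : ℝ => s • e) ((1:ℝ) • e) t := (hasDerivAt_id t).smul_const e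
    have h2 := this.const_add x₀
    rw [one_smul] at h2
    exact h2
  have hev : ∀ᶠ t in 𝓝 (0:ℝ), c t ∈ U := by
    have : Tendsto c (𝓝 0) (𝓝 x₀) := by rw [← hc0]; exact hcc.tendsto 0
    exact this.eventually (hU.mem_nhds hx₀)
  have h1 : ∀ᶠ t in 𝓝 (0:ℝ), HasDerivAt (f ∘ c) (Fe (c t)) t := by
    filter_upwards [hev] with t ht
    have hdf : DifferentiableAt ℝ f (c t) :=
      (hf.differentiableOn (by norm_num)).differentiableAt (hU.mem_nhds ht)
    exact hdf.hasFDerivAt.comp_hasDerivAt t (hcd t)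
  have h2 : HasDerivAt (Fe ∘ c) (fderiv ℝ Fe x₀ e) 0 := by
    have hdFe : DifferentiableAt ℝ Fe x₀ :=
      (hFe.differentiableOn (by norm_num)).differentiableAt (hU.mem_nhds hx₀)
    rw [← hc0] at hdFe ⊢
    exact hdFe.hasFDerivAt.comp_hasDerivAt 0 (hcd 0)
  have hmax' : IsLocalMax (f ∘ c) 0 := by
    rw [← hc0] at hmax
    exact hmax.comp_continuous hcc.continuousAt
  exact second_deriv_nonpos_of_isLocalMax h1 h2 hmax'

lemma d2_diffAt {f : E → ℝ} {U : Set E} (hU : IsOpen U) (hf : ContDiffOn ℝ 2 f U)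
    {x : E} (hx : x ∈ U) (e : E) :
    DifferentiableAt ℝ (fun y => fderiv ℝ f y e) x :=
  (((hf.fderiv_of_isOpen (m := 1) hU (by norm_num)).clm_apply
    contDiffOn_const).differentiableOn (by norm_num)).differentiableAt (hU.mem_nhds hx)

/-- Second directional derivative of a product. -/
lemma d2_mul {s w : E → ℝ} {U : Set E} (hU : IsOpen U)
    (hs : ContDiffOn ℝ 2 s U) (hw : ContDiffOn ℝ 2 w U) {x : E} (hx : x ∈ U) (e : E) :
    fderiv ℝ (fun y => fderiv ℝ (fun z => s z * w z) y e) x e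
      = s x * fderiv ℝ (fun y => fderiv ℝ w y e) x e
        + 2 * (fderiv ℝ s x e * fderiv ℝ w x e)
        + w x * fderiv ℝ (fun y => fderiv ℝ s y e) x e := by
  set Ps : E → ℝ := fun y => fderiv ℝ s y e with hPs_def
  set Pw : E → ℝ := fun y => fderiv ℝ w y e with hPw_def
  have hsd : ∀ y ∈ U, DifferentiableAt ℝ s y := fun y hy =>
    (hs.differentiableOn (by norm_num)).differentiableAt (hU.mem_nhds hy)
  have hwd : ∀ y ∈ U, DifferentiableAt ℝ w y := fun y hy =>
    (hw.differentiableOn (by norm_num)).differentiableAt (hU.mem_nhds hy)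
  have hPsd : DifferentiableAt ℝ Ps x := d2_diffAt hU hs hx e
  have hPwd : DifferentiableAt ℝ Pw x := d2_diffAt hU hw hx e
  have hev : (fun y => fderiv ℝ (fun z => s z * w z) y e)
      =ᶠ[𝓝 x] fun y => s y * Pw y + w y * Ps y := by
    filter_upwards [hU.mem_nhds hx] with y hy
    rw [fderiv_fun_mul (hsd y hy) (hwd y hy)]
    simp [hPs_def, hPw_def]
  rw [hev.fderiv_eq]
  have h1 : HasFDerivAt (fun y => s y * Pw y + w y * Ps y)
      ((s x • fderiv ℝ Pw x + (fderiv ℝ s x).smulRight (Pw x))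
        + (w x • fderiv ℝ Ps x + (fderiv ℝ w x).smulRight (Ps x))) x :=
    (((hsd x hx).hasFDerivAt).mul' hPwd.hasFDerivAt).add
      (((hwd x hx).hasFDerivAt).mul' hPsd.hasFDerivAt)
  rw [h1.fderiv]
  simp [hPs_def, hPw_def]
  ring

/-- Second directional derivatives agree for locally equal functions. -/
lemma d2_congr_of_eventuallyEq {f g : E → ℝ} {x : E} (h : f =ᶠ[𝓝 x] g) (e : E) :
    fderiv ℝ (fun y => fderiv ℝ f y e) x e = fderiv ℝ (fun y => fderiv ℝ g y e) x e := by
  have h2 : (fun y => fderiv ℝ f y e) =ᶠ[𝓝 x] (fun y => fderiv ℝ g y e) := by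
    filter_upwards [h.eventually_nhds] with y hy
    rw [Filter.EventuallyEq.fderiv_eq hy]
  rw [h2.fderiv_eq]

/-- Second directional derivative of `a + c • b`. -/
lemma d2_add_smul {a b : E → ℝ} {U : Set E} (hU : IsOpen U)
    (ha : ContDiffOn ℝ 2 a U) (hb : ContDiffOn ℝ 2 b U) {x : E} (hx : x ∈ U)
    (c : ℝ) (e : E) :
    fderiv ℝ (fun y => fderiv ℝ (fun z => a z + c * b z) y e) x e
      = fderiv ℝ (fun y => fderiv ℝ a y e) x e
        + c * fderiv ℝ (fun y => fderiv ℝ b y e) x e := by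
  have had : ∀ y ∈ U, DifferentiableAt ℝ a y := fun y hy =>
    (ha.differentiableOn (by norm_num)).differentiableAt (hU.mem_nhds hy)
  have hbd : ∀ y ∈ U, DifferentiableAt ℝ b y := fun y hy =>
    (hb.differentiableOn (by norm_num)).differentiableAt (hU.mem_nhds hy)
  have hPad : DifferentiableAt ℝ (fun y => fderiv ℝ a y e) x := d2_diffAt hU ha hx e
  have hPbd : DifferentiableAt ℝ (fun y => fderiv ℝ b y e) x := d2_diffAt hU hb hx e
  have hev : (fun y => fderiv ℝ (fun z => a z + c * b z) y e)
      =ᶠ[𝓝 x] fun y => fderiv ℝ a y e + c * fderiv ℝ b y e := by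
    filter_upwards [hU.mem_nhds hx] with y hy
    rw [fderiv_fun_add (had y hy) ((hbd y hy).const_mul c), fderiv_const_mul (hbd y hy)]
    simp
  rw [hev.fderiv_eq]
  have h1 : HasFDerivAt (fun y => fderiv ℝ a y e + c * fderiv ℝ b y e)
      (fderiv ℝ (fun y => fderiv ℝ a y e) x
        + c • fderiv ℝ (fun y => fderiv ℝ b y e) x) x :=
    hPad.hasFDerivAt.add (hPbd.hasFDerivAt.const_mul c)
  rw [h1.fderiv]
  simp

end Helpers

/-- The Laplacian of `u : ℝ^N → ℝ` written coordinatewise via `fderiv`. -/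
noncomputable def lap (N : ℕ) (u : EuclideanSpace ℝ (Fin N) → ℝ)
    (x : EuclideanSpace ℝ (Fin N)) : ℝ :=
  ∑ i : Fin N, fderiv ℝ (fun y => fderiv ℝ u y (EuclideanSpace.single i 1)) x
    (EuclideanSpace.single i 1)

section Exp
variable {N : ℕ} (l : ℝ) (i₀ : Fin N)

lemma exp_coord_contDiff :
    ContDiff ℝ 2 (fun z : EuclideanSpace ℝ (Fin N) => Real.exp (l * z i₀)) := by
  have h1 : ContDiff ℝ 2 (fun z : EuclideanSpace ℝ (Fin N) => l * z i₀) :=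
    contDiff_const.mul (EuclideanSpace.proj (𝕜 := ℝ) i₀).contDiff
  exact Real.contDiff_exp.comp h1

lemma exp_coord_hasFDerivAt (x : EuclideanSpace ℝ (Fin N)) :
    HasFDerivAt (fun z : EuclideanSpace ℝ (Fin N) => Real.exp (l * z i₀))
      ((l * Real.exp (l * x i₀)) • (EuclideanSpace.proj i₀ :
        EuclideanSpace ℝ (Fin N) →L[ℝ] ℝ)) x := by
  have h1 : HasFDerivAt (fun z : EuclideanSpace ℝ (Fin N) => l * z i₀)
      (l • (EuclideanSpace.proj i₀ : EuclideanSpace ℝ (Fin N) →L[ℝ] ℝ)) x :=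
    ((EuclideanSpace.proj (𝕜 := ℝ) i₀).hasFDerivAt (x := x)).const_mul l
  have h2 : HasDerivAt Real.exp (Real.exp (l * x i₀)) (l * x i₀) := Real.hasDerivAt_exp _
  have h3 := h2.comp_hasFDerivAt x h1
  rw [smul_smul, mul_comm] at h3
  exact h3

lemma exp_coord_fderiv_apply (x e : EuclideanSpace ℝ (Fin N)) :
    fderiv ℝ (fun z : EuclideanSpace ℝ (Fin N) => Real.exp (l * z i₀)) x e
      = l * Real.exp (l * x i₀) * e i₀ := by
  rw [(exp_coord_hasFDerivAt l i₀ x).fderiv]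
  simp

lemma exp_coord_d2 (x e : EuclideanSpace ℝ (Fin N)) :
    fderiv ℝ (fun y => fderiv ℝ
        (fun z : EuclideanSpace ℝ (Fin N) => Real.exp (l * z i₀)) y e) x e
      = (l * e i₀) * (l * Real.exp (l * x i₀) * e i₀) := by
  have hfun : (fun y => fderiv ℝ
      (fun z : EuclideanSpace ℝ (Fin N) => Real.exp (l * z i₀)) y e)
      = fun y => (l * e i₀) * Real.exp (l * y i₀) := by
    funext y
    rw [exp_coord_fderiv_apply]
    ring
  rw [hfun, ((exp_coord_hasFDerivAt l i₀ x).const_mul (l * e i₀)).fderiv]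
  simp

lemma exp_coord_lap (x : EuclideanSpace ℝ (Fin N)) :
    lap N (fun z => Real.exp (l * z i₀)) x = l ^ 2 * Real.exp (l * x i₀) := by
  unfold lap
  have hterm : ∀ i : Fin N,
      fderiv ℝ (fun y => fderiv ℝ
        (fun z : EuclideanSpace ℝ (Fin N) => Real.exp (l * z i₀)) y
        (EuclideanSpace.single i 1)) x (EuclideanSpace.single i 1)
      = if i₀ = i then l ^ 2 * Real.exp (l * x i₀) else 0 := by
    intro i
    rw [exp_coord_d2, EuclideanSpace.single_apply]
    by_cases h : i₀ = i <;> simp [h] <;> ring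
  rw [Finset.sum_congr rfl (fun i _ => hterm i), Finset.sum_ite_eq]
  simp

lemma coord_abs_le_norm (x : EuclideanSpace ℝ (Fin N)) (i : Fin N) : |x i| ≤ ‖x‖ := by
  rw [EuclideanSpace.norm_eq]
  rw [show |x i| = Real.sqrt (|x i| ^ 2) by rw [Real.sqrt_sq_eq_abs, abs_abs]]
  apply Real.sqrt_le_sqrt
  have h : ‖x i‖ ^ 2 = |x i| ^ 2 := by rw [Real.norm_eq_abs]
  rw [← h]
  exact Finset.single_le_sum (f := fun j => ‖x j‖ ^ 2)
    (fun j _ => sq_nonneg _) (Finset.mem_univ i)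

end Exp

set_option maxHeartbeats 2000000 in
/-- If a nonnegative subsolution `u` of `-Δu - Vu = 0` on the exterior of the unit ball
is smaller than some positive supersolution `v` (i.e. `u/v → 0` at infinity), and
condition (*) holds, then `u` is dominated by every positive supersolution `w`. -/
theorem small_subsolution_dominated_p_eq_two (N : ℕ) (hN : 2 ≤ N)
    (V u : EuclideanSpace ℝ (Fin N) → ℝ)
    (hVcont : ContinuousOn V {x : EuclideanSpace ℝ (Fin N) | 1 ≤ ‖x‖})
    (hstar : ∃ φ : EuclideanSpace ℝ (Fin N) → ℝ,
      ContDiffOn ℝ 2 φ {x : EuclideanSpace ℝ (Fin N) | 1 < ‖x‖} ∧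
      (∀ x : EuclideanSpace ℝ (Fin N), 1 < ‖x‖ → 0 < φ x) ∧
      (∀ x : EuclideanSpace ℝ (Fin N), 1 < ‖x‖ → 0 ≤ -lap N φ x - V x * φ x) ∧
      (∃ x : EuclideanSpace ℝ (Fin N), 1 < ‖x‖ ∧ -lap N φ x - V x * φ x ≠ 0))
    (hu0 : ∀ x : EuclideanSpace ℝ (Fin N), 1 ≤ ‖x‖ → 0 ≤ u x)
    (hucont : ContinuousOn u {x : EuclideanSpace ℝ (Fin N) | 1 ≤ ‖x‖})
    (huC2 : ContDiffOn ℝ 2 u {x : EuclideanSpace ℝ (Fin N) | 1 < ‖x‖})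
    (husub : ∀ x : EuclideanSpace ℝ (Fin N), 1 < ‖x‖ → -lap N u x - V x * u x ≤ 0)
    (hv : ∃ v : EuclideanSpace ℝ (Fin N) → ℝ,
      ContinuousOn v {x : EuclideanSpace ℝ (Fin N) | 1 ≤ ‖x‖} ∧
      ContDiffOn ℝ 2 v {x : EuclideanSpace ℝ (Fin N) | 1 < ‖x‖} ∧
      (∀ x : EuclideanSpace ℝ (Fin N), 1 ≤ ‖x‖ → 0 < v x) ∧
      (∀ x : EuclideanSpace ℝ (Fin N), 1 < ‖x‖ → 0 ≤ -lap N v x - V x * v x) ∧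
      (∀ ε : ℝ, 0 < ε → ∃ R : ℝ, ∀ x : EuclideanSpace ℝ (Fin N),
        R ≤ ‖x‖ → u x / v x < ε)) :
    ∀ w : EuclideanSpace ℝ (Fin N) → ℝ,
      ContinuousOn w {x : EuclideanSpace ℝ (Fin N) | 1 ≤ ‖x‖} →
      ContDiffOn ℝ 2 w {x : EuclideanSpace ℝ (Fin N) | 1 < ‖x‖} →
      (∀ x : EuclideanSpace ℝ (Fin N), 1 ≤ ‖x‖ → 0 < w x) →
      (∀ x : EuclideanSpace ℝ (Fin N), 1 < ‖x‖ → 0 ≤ -lap N w x - V x * w x) →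
      ∃ C : ℝ, 0 < C ∧ ∀ x : EuclideanSpace ℝ (Fin N), 1 ≤ ‖x‖ → u x ≤ C * w x := by
  obtain ⟨v, hvcont, hvC2, hv0, hvsuper, hvsmall⟩ := hv
  intro w hwcont hwC2 hw0 hwsuper
  classical
  set U : Set (EuclideanSpace ℝ (Fin N)) := {x | 1 < ‖x‖} with hU_def
  have hUopen : IsOpen U := isOpen_lt continuous_const continuous_norm
  have hi0 : (0:ℕ) < N := by omega
  set i₀ : Fin N := ⟨0, hi0⟩
  set S1 : Set (EuclideanSpace ℝ (Fin N)) := {x | 1 ≤ ‖x‖} with hS1_def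
  -- the constant C from the compact annulus 1 ≤ ‖x‖ ≤ 2
  set K₀ : Set (EuclideanSpace ℝ (Fin N)) := {x | 1 ≤ ‖x‖ ∧ ‖x‖ ≤ 2} with hK₀_def
  have hK₀closed : IsClosed K₀ := by
    have : K₀ = (fun x : EuclideanSpace ℝ (Fin N) => ‖x‖) ⁻¹' (Set.Icc 1 2) := rfl
    rw [this]
    exact isClosed_Icc.preimage continuous_norm
  have hK₀c : IsCompact K₀ := by
    apply (isCompact_closedBall (0:EuclideanSpace ℝ (Fin N)) 2).of_isClosed_subset hK₀closed
    intro z hz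
    simpa [Metric.mem_closedBall, dist_zero_right] using hz.2
  have hK₀ne : K₀.Nonempty := by
    refine ⟨EuclideanSpace.single i₀ 1, ?_⟩
    constructor <;> simp [EuclideanSpace.norm_single]
  have hK₀sub : K₀ ⊆ S1 := fun x hx => hx.1
  obtain ⟨xm, hxmK, hxm⟩ := hK₀c.exists_isMaxOn hK₀ne
    (((hucont.mono hK₀sub).div (hwcont.mono hK₀sub)
      (fun x hx => (hw0 x hx.1).ne')))
  set C : ℝ := max (u xm / w xm) 1 with hC_def
  have hC1 : (1:ℝ) ≤ C := le_max_right _ _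
  have hCpos : 0 < C := lt_of_lt_of_le one_pos hC1
  have hK₀bound : ∀ x ∈ K₀, u x ≤ C * w x := by
    intro x hx
    have hwx : 0 < w x := hw0 x hx.1
    have h1 : u x / w x ≤ u xm / w xm := hxm hx
    have h2 : u x / w x ≤ C := h1.trans (le_max_left _ _)
    calc u x = (u x / w x) * w x := by field_simp
    _ ≤ C * w x := by nlinarith
  refine ⟨C, hCpos, ?_⟩
  -- key claim via the maximum principle on annuli
  have claim2 : ∀ ε : ℝ, 0 < ε → ∀ y : EuclideanSpace ℝ (Fin N), 2 ≤ ‖y‖ → u y ≤ C * w y + ε * v y := by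
    intro ε hε y hy
    have hy1 : (1:ℝ) ≤ ‖y‖ := by linarith
    obtain ⟨R₀, hR₀⟩ := hvsmall ε hε
    set R : ℝ := max R₀ (max 3 (‖y‖ + 1)) with hR_def
    have hR3 : (3:ℝ) ≤ R := le_trans (le_max_left _ _) (le_max_right _ _)
    have hRy : ‖y‖ < R := by
      have : ‖y‖ + 1 ≤ R := le_trans (le_max_right _ _) (le_max_right _ _)
      linarith
    have hRR₀ : R₀ ≤ R := le_max_left _ _
    -- the annulus K
    set K : Set (EuclideanSpace ℝ (Fin N)) := {z | 2 ≤ ‖z‖ ∧ ‖z‖ ≤ R} with hK_defn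
    have hKsubU : K ⊆ U := fun z hz => by
      have : (2:ℝ) ≤ ‖z‖ := hz.1
      simp only [hU_def, Set.mem_setOf_eq]; linarith
    have hKsub1 : K ⊆ S1 := fun z hz => by
      have : (2:ℝ) ≤ ‖z‖ := hz.1
      simp only [hS1_def, Set.mem_setOf_eq]; linarith
    have hKclosed : IsClosed K := by
      have : K = (fun x : EuclideanSpace ℝ (Fin N) => ‖x‖) ⁻¹' (Set.Icc 2 R) := rfl
      rw [this]
      exact isClosed_Icc.preimage continuous_norm
    have hKc : IsCompact K := by
      apply (isCompact_closedBall (0:EuclideanSpace ℝ (Fin N)) R).of_isClosed_subset hKclosed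
      intro z hz
      simpa [Metric.mem_closedBall, dist_zero_right] using hz.2
    have hyK : y ∈ K := ⟨hy, hRy.le⟩
    have hKne : K.Nonempty := ⟨y, hyK⟩
    have hwU : ∀ z ∈ U, 0 < w z := fun z hz => hw0 z (le_of_lt hz)
    -- the functions h and s
    set h : EuclideanSpace ℝ (Fin N) → ℝ := fun z => u z - ε * v z - C * w z with hh_def
    set s : EuclideanSpace ℝ (Fin N) → ℝ := fun z => h z / w z with hs_def
    have hhC2 : ContDiffOn ℝ 2 h U :=
      (huC2.sub (contDiffOn_const.mul hvC2)).sub (contDiffOn_const.mul hwC2)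
    have hsC2 : ContDiffOn ℝ 2 s U := hhC2.div hwC2 (fun z hz => (hwU z hz).ne')
    have hhcont : ContinuousOn h S1 :=
      ((hucont.sub (continuousOn_const.mul hvcont)).sub
        (continuousOn_const.mul hwcont))
    have hscont : ContinuousOn s K :=
      (hhcont.mono hKsub1).div (hwcont.mono hKsub1)
        (fun z hz => (hw0 z (hKsub1 hz)).ne')
    have hsw : ∀ z ∈ U, s z * w z = h z := fun z hz =>
      div_mul_cancel₀ _ (hwU z hz).ne'
    -- maximum of s on K
    obtain ⟨zm, hzmK, hzm⟩ := hKc.exists_isMaxOn hKne hscont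
    set m : ℝ := s zm with hm_def
    have hsy : s y ≤ 0 → u y ≤ C * w y + ε * v y := by
      intro hsy0
      have hwy : 0 < w y := hw0 y hy1
      have : h y ≤ 0 := by
        rw [← hsw y (hKsubU hyK)]
        exact mul_nonpos_of_nonpos_of_nonneg hsy0 hwy.le
      simp only [hh_def] at this
      linarith
    rcases le_or_gt m 0 with hm | hm
    · exact hsy ((hzm hyK).trans hm)
    exfalso
    -- boundary bound
    have hbdry : ∀ z ∈ K, (‖z‖ = 2 ∨ ‖z‖ = R) → s z ≤ 0 := by
      intro z hzK hzb
      have hz1 : (1:ℝ) ≤ ‖z‖ := hKsub1 hzK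
      have hwz : 0 < w z := hw0 z hz1
      have hvz : 0 < v z := hv0 z hz1
      have hhz : h z ≤ 0 := by
        rcases hzb with h2 | hR
        · have hzK₀ : z ∈ K₀ := ⟨hz1, le_of_eq h2⟩
          have := hK₀bound z hzK₀
          simp only [hh_def]
          nlinarith
        · have : u z / v z < ε := hR₀ z (by rw [hR]; exact hRR₀)
          have huz : u z < ε * v z := (div_lt_iff₀ hvz).1 this
          simp only [hh_def]
          nlinarith
      exact div_nonpos_of_nonpos_of_nonneg hhz hwz.le
    -- positive lower bound for w on K
    obtain ⟨zw, hzwK, hzw⟩ := hKc.exists_isMinOn hKne (hwcont.mono hKsub1)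
    set wmin : ℝ := w zw with hwmin_def
    have hwminpos : 0 < wmin := hw0 zw (hKsub1 hzwK)
    have hwmin_le : ∀ z ∈ K, wmin ≤ w z := fun z hz => hzw hz
    -- bound for the i₀ derivative of w on K
    set Pw : EuclideanSpace ℝ (Fin N) → ℝ := fun z => fderiv ℝ w z (EuclideanSpace.single i₀ 1) with hPw_def
    have hPwcont : ContinuousOn Pw U :=
      ((hwC2.fderiv_of_isOpen (m := 1) hUopen (by norm_num)).clm_apply
        contDiffOn_const).continuousOn
    obtain ⟨zM, hzMK, hzM⟩ := hKc.exists_isMaxOn hKne ((hPwcont.mono hKsubU).abs)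
    set M : ℝ := |Pw zM| with hM_def
    have hM0 : 0 ≤ M := abs_nonneg _
    have hMle : ∀ z ∈ K, |Pw z| ≤ M := fun z hz => hzM hz
    set l : ℝ := 2 * M / wmin + 1 with hl_def
    have hlpos : 0 < l := by positivity
    have hlkey : ∀ z ∈ K, 2 * |Pw z| < l * w z := by
      intro z hz
      have h1 : 2 * |Pw z| ≤ 2 * M := by linarith [hMle z hz]
      have h2 : l * wmin = 2 * M + wmin := by
        rw [hl_def, add_mul, div_mul_cancel₀ _ hwminpos.ne', one_mul]
      have h3 : l * wmin ≤ l * w z := by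
        apply mul_le_mul_of_nonneg_left (hwmin_le z hz) hlpos.le
      linarith
    -- the exponential perturbation
    set φ : EuclideanSpace ℝ (Fin N) → ℝ := fun z => Real.exp (l * z i₀) with hφ_def
    have hφpos : ∀ z, 0 < φ z := fun z => Real.exp_pos _
    have hφC2 : ContDiff ℝ 2 φ := exp_coord_contDiff l i₀
    set B : ℝ := Real.exp (l * R) with hB_def
    have hBpos : 0 < B := Real.exp_pos _
    have hφle : ∀ z ∈ K, φ z ≤ B := by
      intro z hz
      apply Real.exp_le_exp.2
      have h1 : z i₀ ≤ ‖z‖ := (abs_le.1 (coord_abs_le_norm z i₀)).2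
      have h2 : ‖z‖ ≤ R := hz.2
      nlinarith
    have hφge : ∀ z ∈ K, B⁻¹ ≤ φ z := by
      intro z hz
      rw [hB_def, ← Real.exp_neg]
      apply Real.exp_le_exp.2
      have h1 : -‖z‖ ≤ z i₀ := (abs_le.1 (coord_abs_le_norm z i₀)).1
      have h2 : ‖z‖ ≤ R := hz.2
      nlinarith
    set δ : ℝ := m / (2 * B) with hδ_def
    have hδpos : 0 < δ := by positivity
    have hδB : δ * B = m / 2 := by
      rw [hδ_def, div_mul_eq_mul_div, mul_div_mul_right m 2 hBpos.ne']
    set sδ : EuclideanSpace ℝ (Fin N) → ℝ := fun z => s z + δ * φ z with hsδ_def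
    have hsδcont : ContinuousOn sδ K :=
      hscont.add (continuousOn_const.mul (hφC2.continuous.continuousOn))
    obtain ⟨x₀, hx₀K, hx₀max⟩ := hKc.exists_isMaxOn hKne hsδcont
    have hkey1 : m + δ * B⁻¹ ≤ sδ x₀ := by
      have h1 : sδ zm ≤ sδ x₀ := hx₀max hzmK
      have h2 : m + δ * B⁻¹ ≤ sδ zm := by
        simp only [hsδ_def]
        have := hφge zm hzmK
        nlinarith
      exact h2.trans h1
    have hx₀notbdry : ¬(‖x₀‖ = 2 ∨ ‖x₀‖ = R) := by
      intro hb
      have h1 : s x₀ ≤ 0 := hbdry x₀ hx₀K hb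
      have h2 : sδ x₀ ≤ δ * B := by
        simp only [hsδ_def]
        have := hφle x₀ hx₀K
        nlinarith
      have h3 : 0 < δ * B⁻¹ := by positivity
      rw [hδB] at h2
      linarith
    push_neg at hx₀notbdry
    have hx₀in : 2 < ‖x₀‖ ∧ ‖x₀‖ < R :=
      ⟨lt_of_le_of_ne hx₀K.1 (Ne.symm hx₀notbdry.1),
        lt_of_le_of_ne hx₀K.2 hx₀notbdry.2⟩
    have hx₀U : x₀ ∈ U := hKsubU hx₀K
    have hs₀pos : 0 < s x₀ := by
      have h1 : δ * φ x₀ ≤ δ * B := by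
        have := hφle x₀ hx₀K
        nlinarith
      have h2 : 0 < δ * B⁻¹ := by positivity
      have h3 : s x₀ = sδ x₀ - δ * φ x₀ := by simp [hsδ_def]
      rw [hδB] at h1
      linarith
    -- x₀ is a local max of sδ
    have hlocmax : IsLocalMax sδ x₀ := by
      apply hx₀max.isLocalMax
      rw [mem_nhds_iff]
      refine ⟨{z : EuclideanSpace ℝ (Fin N) | 2 < ‖z‖ ∧ ‖z‖ < R}, ?_, ?_, hx₀in⟩
      · intro z hz
        exact ⟨hz.1.le, hz.2.le⟩
      · exact (isOpen_lt continuous_const continuous_norm).inter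
          (isOpen_lt continuous_norm continuous_const)
    have hφC2On : ContDiffOn ℝ 2 φ U := hφC2.contDiffOn
    have hsδC2 : ContDiffOn ℝ 2 sδ U := hsC2.add (contDiffOn_const.mul hφC2On)
    -- gradient of sδ vanishes at x₀
    have hsdiff : DifferentiableAt ℝ s x₀ :=
      (hsC2.differentiableOn (by norm_num)).differentiableAt (hUopen.mem_nhds hx₀U)
    have hφdiff : DifferentiableAt ℝ φ x₀ :=
      (hφC2.differentiable (by norm_num)).differentiableAt
    have hgrad : ∀ e : EuclideanSpace ℝ (Fin N), fderiv ℝ s x₀ e = -(δ * (l * φ x₀ * e i₀)) := by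
      intro e
      have h0 : fderiv ℝ sδ x₀ = 0 := hlocmax.fderiv_eq_zero
      have h1 : fderiv ℝ sδ x₀ = fderiv ℝ s x₀ + δ • fderiv ℝ φ x₀ := by
        simp only [hsδ_def]
        rw [fderiv_fun_add hsdiff (hφdiff.const_mul δ), fderiv_const_mul hφdiff]
      have h2 : fderiv ℝ s x₀ e + δ * fderiv ℝ φ x₀ e = 0 := by
        have := congrArg (fun (L : EuclideanSpace ℝ (Fin N) →L[ℝ] ℝ) => L e) (h1.symm.trans h0)
        simpa using this
      have h3 : fderiv ℝ φ x₀ e = l * φ x₀ * e i₀ :=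
        exp_coord_fderiv_apply l i₀ x₀ e
      rw [h3] at h2
      linarith
    -- Laplacian inequality for s at x₀
    have hlapsδ : lap N sδ x₀ ≤ 0 := by
      apply Finset.sum_nonpos
      intro i _
      exact directional_second_deriv_nonpos hUopen hsδC2 hx₀U hlocmax _
    have hlapadd : lap N sδ x₀ = lap N s x₀ + δ * lap N φ x₀ := by
      unfold lap
      rw [Finset.mul_sum, ← Finset.sum_add_distrib]
      apply Finset.sum_congr rfl
      intro i _
      simp only [hsδ_def]
      exact d2_add_smul hUopen hsC2 hφC2On hx₀U δ _
    have hlapφ : lap N φ x₀ = l ^ 2 * φ x₀ := exp_coord_lap l i₀ x₀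
    have hlaps : lap N s x₀ ≤ -(δ * (l ^ 2 * φ x₀)) := by
      rw [hlapadd, hlapφ] at hlapsδ
      linarith
    -- Laplacian of h via the product rule
    have hhev : h =ᶠ[𝓝 x₀] fun z => s z * w z := by
      filter_upwards [hUopen.mem_nhds hx₀U] with z hz
      exact (hsw z hz).symm
    have hlaph_eq : lap N h x₀ = s x₀ * lap N w x₀
        + 2 * (∑ i : Fin N, fderiv ℝ s x₀ (EuclideanSpace.single i 1)
            * fderiv ℝ w x₀ (EuclideanSpace.single i 1))
        + w x₀ * lap N s x₀ := by
      unfold lap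
      rw [Finset.mul_sum, Finset.mul_sum, Finset.mul_sum]
      rw [← Finset.sum_add_distrib, ← Finset.sum_add_distrib]
      apply Finset.sum_congr rfl
      intro i _
      rw [d2_congr_of_eventuallyEq hhev]
      exact d2_mul hUopen hsC2 hwC2 hx₀U _
    -- the cross term
    have hcross : (∑ i : Fin N, fderiv ℝ s x₀ (EuclideanSpace.single i 1)
        * fderiv ℝ w x₀ (EuclideanSpace.single i 1))
        = -(δ * (l * φ x₀)) * Pw x₀ := by
      have hterm : ∀ i : Fin N, fderiv ℝ s x₀ (EuclideanSpace.single i 1)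
          * fderiv ℝ w x₀ (EuclideanSpace.single i 1)
          = if i₀ = i then -(δ * (l * φ x₀)) * Pw x₀ else 0 := by
        intro i
        rw [hgrad]
        rw [show ((EuclideanSpace.single i (1:ℝ)) i₀ : ℝ)
          = if i₀ = i then 1 else 0 from EuclideanSpace.single_apply i 1 i₀]
        by_cases hii : i₀ = i
        · subst hii
          simp [hPw_def]
        · simp [hii]
      rw [Finset.sum_congr rfl (fun i _ => hterm i), Finset.sum_ite_eq]
      simp
    -- Laplacian of h via linearity
    have hrw : h =ᶠ[𝓝 x₀] fun z => (u z + -ε * v z) + -C * w z := by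
      apply Filter.Eventually.of_forall
      intro z
      simp only [hh_def]
      ring
    have hauxC2 : ContDiffOn ℝ 2 (fun z => u z + -ε * v z) U :=
      huC2.add (contDiffOn_const.mul hvC2)
    have hlaph_lin : lap N h x₀ = lap N u x₀ - ε * lap N v x₀ - C * lap N w x₀ := by
      unfold lap
      rw [Finset.mul_sum, Finset.mul_sum, ← Finset.sum_sub_distrib, ← Finset.sum_sub_distrib]
      apply Finset.sum_congr rfl
      intro i _
      have e1 := d2_congr_of_eventuallyEq hrw (EuclideanSpace.single i 1)
      have e2 : fderiv ℝ (fun y => fderiv ℝ (fun z => (u z + -ε * v z) + -C * w z) y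
            (EuclideanSpace.single i 1)) x₀ (EuclideanSpace.single i 1)
          = fderiv ℝ (fun y => fderiv ℝ (fun z => u z + -ε * v z) y
              (EuclideanSpace.single i 1)) x₀ (EuclideanSpace.single i 1)
            + -C * fderiv ℝ (fun y => fderiv ℝ w y
              (EuclideanSpace.single i 1)) x₀ (EuclideanSpace.single i 1) :=
        d2_add_smul hUopen hauxC2 hwC2 hx₀U (-C) _
      have e3 : fderiv ℝ (fun y => fderiv ℝ (fun z => u z + -ε * v z) y
            (EuclideanSpace.single i 1)) x₀ (EuclideanSpace.single i 1)
          = fderiv ℝ (fun y => fderiv ℝ u y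
              (EuclideanSpace.single i 1)) x₀ (EuclideanSpace.single i 1)
            + -ε * fderiv ℝ (fun y => fderiv ℝ v y
              (EuclideanSpace.single i 1)) x₀ (EuclideanSpace.single i 1) :=
        d2_add_smul hUopen huC2 hvC2 hx₀U (-ε) _
      rw [e1, e2, e3]
      ring
    -- final contradiction
    have hx₀1 : 1 < ‖x₀‖ := by linarith [hx₀in.1]
    have hw₀ : 0 < w x₀ := hw0 x₀ hx₀1.le
    have husub₀ := husub x₀ hx₀1
    have hvsuper₀ := hvsuper x₀ hx₀1
    have hwsuper₀ := hwsuper x₀ hx₀1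
    have hh₀ : h x₀ = s x₀ * w x₀ := (hsw x₀ hx₀U).symm
    have hineq : 0 ≤ lap N h x₀ + V x₀ * h x₀ := by
      rw [hlaph_lin]
      simp only [hh_def]
      have hA : 0 ≤ ε * (-lap N v x₀ - V x₀ * v x₀) := mul_nonneg hε.le hvsuper₀
      have hB : 0 ≤ C * (-lap N w x₀ - V x₀ * w x₀) := mul_nonneg hCpos.le hwsuper₀
      nlinarith [husub₀]
    rw [hlaph_eq, hcross, hh₀] at hineq
    have t1 : s x₀ * (lap N w x₀ + V x₀ * w x₀) ≤ 0 :=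
      mul_nonpos_of_nonneg_of_nonpos hs₀pos.le (by linarith)
    have t2 : w x₀ * lap N s x₀ ≤ w x₀ * (-(δ * (l ^ 2 * φ x₀))) :=
      mul_le_mul_of_nonneg_left hlaps hw₀.le
    have hq : 0 < δ * l * φ x₀ := by positivity
    have h5 : 2 * (-(Pw x₀)) < l * w x₀ := by
      have := neg_le_abs (Pw x₀)
      linarith [hlkey x₀ hx₀K]
    have h6 := mul_lt_mul_of_pos_left h5 hq
    nlinarith [hineq, t1, t2, h6]
  -- conclude
  intro x hx
  rcases le_or_gt ‖x‖ 2 with h2 | h2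
  · exact hK₀bound x ⟨hx, h2⟩
  · have hvx : 0 < v x := hv0 x hx
    have hstep : ∀ η : ℝ, 0 < η → u x ≤ C * w x + η := by
      intro η hη
      have hc := claim2 (η / v x) (by positivity) x h2.le
      calc u x ≤ C * w x + (η / v x) * v x := hc
      _ = C * w x + η := by field_simp
    exact le_of_forall_pos_le_add hstep
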